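/- arXiv:1903.02634 — 7 statements merged into one kernel-verified Lean document; each statement's English description precedes it below -/
import Mathlib

section
/- Let 0 < R₂ < R₁ < L < R₁ + R₂ (a linearly stable period-two orbit of length L between two focusing points of radii of curvature R₁ > R₂). Then for every r with 0 ≤ r < L − R₁, the reduced parameters L' = L − 2r, R₁' = R₁ − r, R₂' = R₂ − r satisfy R₂' > 0, L' < R₁' + R₂', and (L' − R₁')·(L' − R₂') > 0; that is, the period-two orbit of the physical billiard with particle radius r remains linearly stable. -/
/-- For a linearly stable period-two orbit of length `L` between two focusing points of
radii of curvature `R₁ > R₂` (with `0 < R₂ < R₁ < L < R₁ + R₂`), the orbit of the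
physical billiard with particle radius `0 ≤ r < L - R₁` remains linearly stable:
the reduced parameters `L' = L - 2r`, `R₁' = R₁ - r`, `R₂' = R₂ - r` satisfy
`R₂' > 0`, `L' < R₁' + R₂'` and `(L' - R₁') * (L' - R₂') > 0`. -/
theorem physical_orbit_remains_stable_small_radius
    (R₁ R₂ L : ℝ) (h₂ : 0 < R₂) (h₂₁ : R₂ < R₁) (h₁L : R₁ < L) (hL : L < R₁ + R₂) :
    ∀ r : ℝ, 0 ≤ r → r < L - R₁ →
      R₂ - r > 0 ∧ L - 2 * r < (R₁ - r) + (R₂ - r) ∧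
      ((L - 2 * r) - (R₁ - r)) * ((L - 2 * r) - (R₂ - r)) > 0 := by
  intro r hr hrL
  refine ⟨by linarith, by linarith, ?_⟩
  have h1 : L - 2 * r - (R₁ - r) > 0 := by linarith
  have h2 : L - 2 * r - (R₂ - r) > 0 := by linarith
  positivity
end

section
/- Let 0 < R₂ < R₁ < L < R₁ + R₂. Then for every r with L − R₁ < r < min(L − R₂, L/2), the reduced parameters L' = L − 2r, R₁' = R₁ − r, R₂' = R₂ − r satisfy L' > 0 and (L' − R₁')·(L' − R₂') < 0; that is, for particle radii in this range the period-two orbit of the physical billiard violates condition (2) and is linearly unstable: the orbit loses stability as r crosses the critical value L − R₁. -/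
/-- For a linearly stable period-two orbit of length `L` between two focusing points of
radii of curvature `R₁ > R₂` (with `0 < R₂ < R₁ < L < R₁ + R₂`), the orbit of the
physical billiard loses stability for particle radii `r` with
`L - R₁ < r < min (L - R₂) (L / 2)`: the reduced parameters satisfy `L' > 0` and
`(L' - R₁') * (L' - R₂') < 0`, so condition (2) is violated. -/
theorem physical_orbit_loses_stability
    (R₁ R₂ L : ℝ) (h₂ : 0 < R₂) (h₂₁ : R₂ < R₁) (h₁L : R₁ < L) (hL : L < R₁ + R₂) :
    ∀ r : ℝ, L - R₁ < r → r < min (L - R₂) (L / 2) →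
      L - 2 * r > 0 ∧
      ((L - 2 * r) - (R₁ - r)) * ((L - 2 * r) - (R₂ - r)) < 0 := by
  intro r h1 h2
  rw [lt_min_iff] at h2
  constructor
  · linarith [h2.2]
  · apply mul_neg_of_neg_of_pos <;> linarith [h2.1]
end

section
/- Let 0 < R₂ < R₁ < L < R₁ + R₂ and additionally L < 2·R₂. Then for every r with L − R₂ < r < L/2, the reduced parameters L' = L − 2r, R₁' = R₁ − r, R₂' = R₂ − r satisfy L' > 0, R₂' > 0, L' < R₁' + R₂', and (L' − R₁')·(L' − R₂') > 0; that is, the period-two orbit of the physical billiard reacquires linear stability once the particle radius exceeds L − R₂ (while still satisfying r < L/2, which requires L < 2·R₂). -/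
/-- For a period-two orbit of length `L` between two focusing points of radii of
curvature `R₁ > R₂` (with `0 < R₂ < R₁ < L < R₁ + R₂` and additionally `L < 2 * R₂`),
the orbit of the physical billiard reacquires linear stability once the particle radius
exceeds `L - R₂` (while `r < L / 2`): the reduced parameters `L' = L - 2r`,
`R₁' = R₁ - r`, `R₂' = R₂ - r` satisfy `L' > 0`, `R₂' > 0`, `L' < R₁' + R₂'` and
`(L' - R₁') * (L' - R₂') > 0`. -/
theorem physical_orbit_reacquires_stability
    (R₁ R₂ L : ℝ) (h₂ : 0 < R₂) (h₂₁ : R₂ < R₁) (h₁L : R₁ < L) (hL : L < R₁ + R₂)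
    (hL2 : L < 2 * R₂) :
    ∀ r : ℝ, L - R₂ < r → r < L / 2 →
      L - 2 * r > 0 ∧ R₂ - r > 0 ∧ L - 2 * r < (R₁ - r) + (R₂ - r) ∧
      ((L - 2 * r) - (R₁ - r)) * ((L - 2 * r) - (R₂ - r)) > 0 := by
  intro r h1 h2
  refine ⟨by linarith, by linarith, by linarith, ?_⟩
  have a : L - 2 * r - (R₁ - r) < 0 := by linarith
  have b : L - 2 * r - (R₂ - r) < 0 := by linarith
  exact mul_pos_of_neg_of_neg a b
end

section
/- Let 0 < R₂ < R₁ and R₁ < L < min(R₁ + R₂, 2·R₂). Then for every r with 0 ≤ r < L/2, the reduced stability quantity satisfies (L − r − R₁)·(L − r − R₂) > 0 if and only if r < L − R₁ or r > L − R₂. Consequently, as the particle radius r increases through [0, L/2), the period-two orbit of the physical billiard is linearly stable, then unstable on the window [L − R₁, L − R₂], then stable again: the character of dynamics changes several times as the size of the particle increases. -/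
/-- With `0 < R₂ < R₁` and `R₁ < L < min (R₁ + R₂) (2 * R₂)`, for every particle
radius `0 ≤ r < L / 2` the reduced condition (2) quantity
`(L - r - R₁) * (L - r - R₂)` is positive if and only if `r < L - R₁` or `r > L - R₂`:
as `r` increases, the period-two orbit of the physical billiard is stable, then
unstable on `[L - R₁, L - R₂]`, then stable again. -/
theorem physical_orbit_stability_windows
    (R₁ R₂ L : ℝ) (h₂ : 0 < R₂) (h₂₁ : R₂ < R₁) (h₁L : R₁ < L)
    (hL : L < min (R₁ + R₂) (2 * R₂)) :
    ∀ r : ℝ, 0 ≤ r → r < L / 2 →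
      ((L - r - R₁) * (L - r - R₂) > 0 ↔ (r < L - R₁ ∨ r > L - R₂)) := by
  intro r hr hr2
  rw [lt_min_iff] at hL
  constructor
  · intro h
    by_contra hc
    push_neg at hc
    obtain ⟨h1, h2⟩ := hc
    nlinarith
  · rintro (h | h)
    · nlinarith
    · nlinarith
end

section
/- Let R₂ > 0 and 0 < R₁ < L < 2·R₁ (a period-two orbit of length L between a focusing point of radius of curvature R₁ and a dispersing point of radius of curvature R₂, which is linearly unstable since L > R₁). Then for every r with L − R₁ < r < L/2, the reduced parameters L' = L − 2r, R₁' = R₁ − r, R₂' = R₂ + r satisfy L' > 0, R₁' > 0, L' > R₁' − R₂', and L' < R₁'; that is, the orbit of the physical billiard satisfies both linear stability conditions once the particle radius exceeds L − R₁, and this is possible (r < L/2) precisely because L < 2·R₁. -/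
/-- An unstable period-two orbit of length `L` between a focusing point of radius of
curvature `R₁` (with `0 < R₁ < L < 2 * R₁`) and a dispersing point of radius of
curvature `R₂ > 0` becomes linearly stable in the physical billiard once the particle
radius exceeds `L - R₁` (while `r < L / 2`): the reduced parameters `L' = L - 2r`,
`R₁' = R₁ - r`, `R₂' = R₂ + r` satisfy `L' > 0`, `R₁' > 0`, `L' > R₁' - R₂'`
and `L' < R₁'`. -/
theorem focusing_dispersing_physical_becomes_stable
    (R₁ R₂ L : ℝ) (hR₂ : 0 < R₂) (hR₁ : 0 < R₁) (h₁L : R₁ < L) (hL : L < 2 * R₁) :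
    ∀ r : ℝ, L - R₁ < r → r < L / 2 →
      L - 2 * r > 0 ∧ R₁ - r > 0 ∧
      L - 2 * r > (R₁ - r) - (R₂ + r) ∧ L - 2 * r < R₁ - r := by
  intro r h1 h2
  refine ⟨by linarith, by linarith, by linarith, by linarith⟩
end

section
/- Let ρ₁ > 0, ρ₂ > 0 and let L = ρ₁ (the tangency configuration of the paper's Lemma 3, where the focusing circle of radius ρ₁ and the dispersing circle of radius ρ₂ are tangent). Then for every r with 0 < r < L/2, the reduced parameters L' = L − 2r, ρ₁' = ρ₁ − r, ρ₂' = ρ₂ + r satisfy L' > 0, ρ₁' > 0, L' > ρ₁' − ρ₂', and L' < ρ₁'; that is, the period-two orbit of the physical billiard is linearly stable for every positive particle radius r < L/2, whereas for r = 0 condition (2) fails (L = ρ₁ gives equality, not strict inequality). -/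
/-- Tangency configuration of Lemma 3: a period-two orbit of length `L = ρ₁` between a
focusing point of radius of curvature `ρ₁` and a dispersing point of radius of curvature
`ρ₂` (both positive) becomes linearly stable for every positive particle radius
`0 < r < L / 2`: the reduced parameters `L' = L - 2r`, `ρ₁' = ρ₁ - r`, `ρ₂' = ρ₂ + r`
satisfy `L' > 0`, `ρ₁' > 0`, `L' > ρ₁' - ρ₂'` and `L' < ρ₁'`; whereas for `r = 0`
condition (2) fails since `L = ρ₁` gives equality, not strict inequality. -/
theorem tangent_circles_soft_transition
    (ρ₁ ρ₂ L : ℝ) (hρ₁ : 0 < ρ₁) (hρ₂ : 0 < ρ₂) (hL : L = ρ₁) :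
    (∀ r : ℝ, 0 < r → r < L / 2 →
      L - 2 * r > 0 ∧ ρ₁ - r > 0 ∧
      L - 2 * r > (ρ₁ - r) - (ρ₂ + r) ∧ L - 2 * r < ρ₁ - r) ∧
    ¬ (L < ρ₁) := by
  subst hL
  constructor
  · intro r hr hr2
    refine ⟨by linarith, by linarith, by linarith, by linarith⟩
  · simp
end

section
/- Let E be the Euclidean plane ℝ² (EuclideanSpace ℝ (Fin 2)), let K ⊆ E be a nonempty closed convex set, and let r ≥ 0. Then the set of points x such that the closed ball of radius r centered at x is contained in the closed r-thickening of K equals K itself: {x | closedBall x r ⊆ Metric.cthickening r K} = K. -/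
open Metric
open scoped RealInnerProductSpace

/-- In the Euclidean plane, for a nonempty closed convex set `K` and `r ≥ 0`, the
reduced table of the closed `r`-thickening of `K` is exactly `K`: the set of centers
`x` whose closed disk of radius `r` is contained in `cthickening r K` equals `K`.
This is the geometric fact behind Lemma 2 (triangle with a smoothened vertex). -/
theorem reduced_table_of_cthickening
    (K : Set (EuclideanSpace ℝ (Fin 2))) (hne : K.Nonempty)
    (hcl : IsClosed K) (hconv : Convex ℝ K) (r : ℝ) (hr : 0 ≤ r) :
    {x : EuclideanSpace ℝ (Fin 2) | closedBall x r ⊆ Metric.cthickening r K} = K := by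
  ext x
  simp only [Set.mem_setOf_eq]
  constructor
  · intro h
    by_contra hx
    -- get nearest point p of K to x
    obtain ⟨p, hpK, hpd⟩ := hcl.exists_infDist_eq_dist hne x
    set d : ℝ := dist x p with hd
    have hd0 : 0 < d := hpd ▸ (hcl.notMem_iff_infDist_pos hne).mp hx
    -- projection characterization
    have hproj : ∀ w ∈ K, ⟪x - p, w - p⟫ ≤ 0 := by
      rw [← norm_eq_iInf_iff_real_inner_le_zero hconv hpK]
      have h2 : infDist x K = ⨅ w : K, ‖x - w‖ := by
        simp_rw [infDist_eq_iInf, dist_eq_norm]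
      rw [← h2, hpd, hd, dist_eq_norm]
    set y : EuclideanSpace ℝ (Fin 2) := x + (r / d) • (x - p) with hy
    have hyx : dist y x = r := by
      rw [hy, dist_eq_norm, add_sub_cancel_left, norm_smul, Real.norm_eq_abs,
        abs_of_nonneg (div_nonneg hr hd0.le), ← dist_eq_norm, ← hd]
      field_simp
    have hymem : y ∈ Metric.cthickening r K := h (mem_closedBall.mpr hyx.le)
    have hyle : infDist y K ≤ r :=
      ENNReal.toReal_le_of_le_ofReal hr (mem_cthickening_iff.mp hymem)
    -- lower bound: every point of K is at distance ≥ d + r from y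
    obtain ⟨q, hqK, hqd⟩ := hcl.exists_infDist_eq_dist hne y
    have key : (d + r) ^ 2 ≤ dist y q ^ 2 := by
      have hyq : y - q = (1 + r / d) • (x - p) + (p - q) := by
        rw [hy]; module
      have hinner : 0 ≤ ⟪x - p, p - q⟫ := by
        have h3 := hproj q hqK
        have hrw : (p : EuclideanSpace ℝ (Fin 2)) - q = -(q - p) := by abel
        rw [hrw, inner_neg_right (𝕜 := ℝ)]; linarith
      have hc : 0 ≤ 1 + r / d := by positivity
      have expand : ‖y - q‖ ^ 2 =
          (1 + r / d) ^ 2 * ‖x - p‖ ^ 2 + 2 * ((1 + r / d) * ⟪x - p, p - q⟫)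
            + ‖p - q‖ ^ 2 := by
        rw [hyq, norm_add_sq_real, norm_smul, real_inner_smul_left, Real.norm_eq_abs,
          abs_of_nonneg hc, mul_pow]
      have hxp : ‖x - p‖ = d := by rw [← dist_eq_norm, hd]
      have h1 : (d + r) ^ 2 = (1 + r / d) ^ 2 * d ^ 2 := by
        field_simp
      rw [dist_eq_norm, expand, hxp, ← h1]
      nlinarith [sq_nonneg (‖p - q‖), mul_nonneg hc hinner]
    have hle : d + r ≤ dist y q := by
      nlinarith [dist_nonneg (x := y) (y := q), hd0, hr]
    have : dist y q ≤ r := hqd ▸ hyle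
    linarith
  · intro hx y hy
    exact mem_cthickening_of_dist_le y x r K hx (mem_closedBall.mp hy)
end
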